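/- Let X be a topological space, V a finite-dimensional real inner product space, and φ : X × V → [0,∞) such that for every x, φ(x,·) is a norm with (1/α)‖v‖ ≤ φ(x,v) ≤ α‖v‖. Define φ*(x,v) := sup { |⟨v,w⟩| / φ(x,w) : w ≠ 0 }. If φ is lower semicontinuous on X × V, then φ* is upper semicontinuous on X × V. -/

import Mathlib

open MeasureTheory Filter Topology Set

theorem stmt_2 {X : Type*} [TopologicalSpace X] {V : Type*} [NormedAddCommGroup V]
    [InnerProductSpace ℝ V] [FiniteDimensional ℝ V] (α : ℝ) (hα : 1 ≤ α)
    (φ : X → V → ℝ)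
    (hhom : ∀ x (c : ℝ) (v : V), φ x (c • v) = |c| * φ x v)
    (hsub : ∀ x (v w : V), φ x (v + w) ≤ φ x v + φ x w)
    (hlow : ∀ x (v : V), (1 / α) * ‖v‖ ≤ φ x v) (hup : ∀ x (v : V), φ x v ≤ α * ‖v‖)
    (hlsc : LowerSemicontinuous fun p : X × V => φ p.1 p.2) :
    UpperSemicontinuous fun p : X × V =>
      ⨆ w : {w : V // w ≠ 0}, |(inner ℝ p.2 w.1 : ℝ)| / φ p.1 w.1 := by
  classical
  have hαpos : (0:ℝ) < α := lt_of_lt_of_le one_pos hα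
  set f : X × V → V → ℝ := fun p w => |(inner ℝ p.2 w : ℝ)| / φ p.1 w with hfdef
  have hφnonneg : ∀ x v, 0 ≤ φ x v := fun x v =>
    le_trans (by positivity) (hlow x v)
  have hφpos : ∀ x (w : V), w ≠ 0 → 0 < φ x w := by
    intro x w hw
    have h1 : (0:ℝ) < (1/α) * ‖w‖ := by
      have := norm_pos_iff.2 hw
      positivity
    exact lt_of_lt_of_le h1 (hlow x w)
  have hbound : ∀ (p : X × V) (w : V), f p w ≤ α * ‖p.2‖ := by
    intro p w
    by_cases hw : w = 0
    · simp only [hfdef, hw, inner_zero_right, abs_zero, zero_div]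
      positivity
    · have hD := hφpos p.1 w hw
      rw [hfdef]
      simp only
      rw [div_le_iff₀ hD]
      have h1 : |(inner ℝ p.2 w : ℝ)| ≤ ‖p.2‖ * ‖w‖ := abs_real_inner_le_norm _ _
      have h2 : ‖w‖ ≤ α * φ p.1 w := by
        have := hlow p.1 w
        have h3 : (1/α) * ‖w‖ * α ≤ φ p.1 w * α := by nlinarith
        calc ‖w‖ = (1/α) * ‖w‖ * α := by field_simp
        _ ≤ φ p.1 w * α := h3
        _ = α * φ p.1 w := by ring
      nlinarith [norm_nonneg p.2]
  have hfnonneg : ∀ (p : X × V) (w : V), 0 ≤ f p w := by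
    intro p w
    rw [hfdef]
    have := hφnonneg p.1 w
    positivity
  have hbdd : ∀ p : X × V, BddAbove (Set.range fun w : {w : V // w ≠ 0} => f p w.1) := by
    intro p
    exact ⟨α * ‖p.2‖, by rintro _ ⟨w, rfl⟩; exact hbound p w.1⟩
  have hhomf : ∀ (p : X × V) (c : ℝ) (w : V), 0 < c → f p (c • w) = f p w := by
    intro p c w hc
    rw [hfdef]
    simp only
    rw [real_inner_smul_right, abs_mul, abs_of_pos hc, hhom, abs_of_pos hc,
      mul_div_mul_left _ _ (ne_of_gt hc)]
  rcases subsingleton_or_nontrivial V with hV | hV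
  · have hE : IsEmpty {w : V // w ≠ 0} := ⟨fun w => w.2 (Subsingleton.elim _ _)⟩
    have hconst : ∀ p : X × V,
        (⨆ w : {w : V // w ≠ 0}, |(inner ℝ p.2 w.1 : ℝ)| / φ p.1 w.1) = 0 := fun p =>
      Real.iSup_of_isEmpty _
    simp only [hconst]
    exact upperSemicontinuous_const
  have hne : Nonempty {w : V // w ≠ 0} := by
    obtain ⟨v, hv⟩ := exists_ne (0 : V)
    exact ⟨⟨v, hv⟩⟩
  show UpperSemicontinuous fun p : X × V => ⨆ w : {w : V // w ≠ 0}, f p w.1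
  intro p₀ y hy
  simp only at hy
  have hψ0 : 0 ≤ ⨆ w : {w : V // w ≠ 0}, f p₀ w.1 := by
    obtain ⟨w0⟩ := hne
    exact le_trans (hfnonneg p₀ w0.1) (le_ciSup (hbdd p₀) w0)
  rcases exists_between hy with ⟨y', hy'₁, hy'₂⟩
  have hy'pos : 0 < y' := lt_of_le_of_lt hψ0 hy'₁
  -- the open set where the strict inequality holds
  set T : Set ((X × V) × V) :=
    {q | |(inner ℝ q.1.2 q.2 : ℝ)| / y' < φ q.1.1 q.2} with hTdef
  have hTopen : IsOpen T := by
    have hlsc2 : LowerSemicontinuous fun q : (X × V) × V => φ q.1.1 q.2 := by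
      rw [lowerSemicontinuous_iff_isOpen_preimage] at hlsc ⊢
      intro t
      have hco : Continuous fun q : (X × V) × V => (q.1.1, q.2) :=
        (continuous_fst.fst).prodMk continuous_snd
      exact (hlsc t).preimage hco
    have hcont : Continuous fun q : (X × V) × V => |(inner ℝ q.1.2 q.2 : ℝ)| / y' :=
      (((continuous_fst.snd).inner continuous_snd).abs).div_const y'
    have hG : LowerSemicontinuous fun q : (X × V) × V =>
        φ q.1.1 q.2 + -(|(inner ℝ q.1.2 q.2 : ℝ)| / y') :=
      hlsc2.add hcont.neg.lowerSemicontinuous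
    have : T = (fun q : (X × V) × V =>
        φ q.1.1 q.2 + -(|(inner ℝ q.1.2 q.2 : ℝ)| / y')) ⁻¹' Set.Ioi 0 := by
      ext q
      simp [hTdef, sub_pos, lt_iff_lt_of_le_iff_le, ← sub_eq_add_neg, sub_pos]
    rw [this]
    exact (lowerSemicontinuous_iff_isOpen_preimage.1 hG) 0
  set S : Set V := Metric.sphere (0 : V) 1 with hSdef
  have hScompact : IsCompact S := isCompact_sphere 0 1
  have hmemT : ∀ u ∈ S, ((p₀, u) : (X × V) × V) ∈ T := by
    intro u hu
    have hu0 : u ≠ 0 := by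
      intro h
      rw [hSdef, Metric.mem_sphere, h] at hu
      simp at hu
    have h1 : f p₀ u < y' := lt_of_le_of_lt (le_ciSup (hbdd p₀) ⟨u, hu0⟩) hy'₁
    have hD := hφpos p₀.1 u hu0
    rw [hfdef] at h1
    simp only at h1
    rw [div_lt_iff₀ hD] at h1
    rw [hTdef]
    simp only [Set.mem_setOf_eq]
    rw [div_lt_iff₀ hy'pos]
    linarith [mul_comm y' (φ p₀.1 u)]
  have hope : ∀ u : V, ∃ AB : Set (X × V) × Set V, IsOpen AB.1 ∧ IsOpen AB.2 ∧
      p₀ ∈ AB.1 ∧ (u ∈ S → u ∈ AB.2 ∧ AB.1 ×ˢ AB.2 ⊆ T) := by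
    intro u
    by_cases hu : u ∈ S
    · rcases isOpen_prod_iff.1 hTopen p₀ u (hmemT u hu) with ⟨A, B, hA, hB, hpA, huB, hsub'⟩
      exact ⟨(A, B), hA, hB, hpA, fun _ => ⟨huB, hsub'⟩⟩
    · exact ⟨(Set.univ, Set.univ), isOpen_univ, isOpen_univ, Set.mem_univ _,
        fun h => absurd h hu⟩
  choose AB hABo1 hABo2 hABp hABm using hope
  have hcov : S ⊆ ⋃ u ∈ S, (AB u).2 := by
    intro u hu
    exact Set.mem_biUnion hu (hABm u hu).1
  obtain ⟨t, hts, htfin, htcov⟩ :=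
    hScompact.elim_finite_subcover_image (fun u _ => hABo2 u) hcov
  set U : Set (X × V) := ⋂ u ∈ t, (AB u).1 with hUdef
  have hUopen : IsOpen U := htfin.isOpen_biInter fun u _ => hABo1 u
  have hp₀U : p₀ ∈ U := Set.mem_iInter₂.2 fun u _ => hABp u
  filter_upwards [hUopen.mem_nhds hp₀U] with p hp
  refine lt_of_le_of_lt (ciSup_le fun w => ?_) hy'₂
  -- normalize w
  obtain ⟨w, hw0⟩ := w
  have hnw : (0:ℝ) < ‖w‖ := norm_pos_iff.2 hw0
  set u : V := ‖w‖⁻¹ • w with hudef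
  have huS : u ∈ S := by
    rw [hSdef, mem_sphere_zero_iff_norm, hudef, norm_smul, norm_inv, norm_norm,
      inv_mul_cancel₀ (ne_of_gt hnw)]
  have hfw : f p w = f p u := by
    have : (‖w‖ : ℝ) • u = w := by
      rw [hudef, smul_smul, mul_inv_cancel₀ (ne_of_gt hnw), one_smul]
    conv_lhs => rw [← this]
    exact hhomf p ‖w‖ u hnw
  obtain ⟨i, hit, hui⟩ := Set.mem_iUnion₂.1 (htcov huS)
  have hpAi : p ∈ (AB i).1 := Set.mem_iInter₂.1 hp i hit
  have hiS : i ∈ S := hts hit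
  have hpu : ((p, u) : (X × V) × V) ∈ T := (hABm i hiS).2 ⟨hpAi, hui⟩
  have hu0 : u ≠ 0 := by
    intro h
    rw [hSdef, mem_sphere_zero_iff_norm, h] at huS
    simp at huS
  have hD := hφpos p.1 u hu0
  rw [hTdef] at hpu
  simp only [Set.mem_setOf_eq] at hpu
  rw [div_lt_iff₀ hy'pos] at hpu
  have : f p u < y' := by
    rw [hfdef]
    simp only
    rw [div_lt_iff₀ hD]
    linarith [mul_comm (φ p.1 u) y']
  rw [hfw]
  exact le_of_lt this
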